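/- Let 𝒮 be a maximal nested collection with support S and let s ∉ S. Then the activation μ_s(𝒮) = 𝒮 ∪ {S ⊕ s} is a maximal nested collection with support S ∪ {s}. -/

import Mathlib

open MvPolynomial

/-- Reachability inside a subset `U` of vertices, along edges of `E`. -/
def ReachIn {n : ℕ} (E : Fin n → Fin n → Prop) (U : Finset (Fin n)) (a b : Fin n) : Prop :=
  Relation.ReflTransGen (fun x y => E x y ∧ x ∈ U ∧ y ∈ U) a b

/-- A nonempty subset `I` is strongly connected if any vertex of `I` can reach any
other vertex of `I` by a directed path staying inside `I`. -/
def StronglyConnected {n : ℕ} (E : Fin n → Fin n → Prop) (I : Finset (Fin n)) : Prop :=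
  I.Nonempty ∧ ∀ a ∈ I, ∀ b ∈ I, ReachIn E I a b

open Classical in
/-- The strongly connected component of `x` in the induced subgraph on `U`. -/
noncomputable def scc {n : ℕ} (E : Fin n → Fin n → Prop) (U : Finset (Fin n)) (x : Fin n) :
    Finset (Fin n) :=
  U.filter fun y => ReachIn E U x y ∧ ReachIn E U y x

/-- `S ⊕ j` : the strongly connected component of `S ∪ {j}` containing `j`. -/
noncomputable def oplus {n : ℕ} (E : Fin n → Fin n → Prop) (S : Finset (Fin n)) (j : Fin n) :
    Finset (Fin n) :=
  scc E (insert j S) j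

/-- `S ⊖ j = (S ∪ {j}) − (S ⊕ j)`. -/
noncomputable def ominus {n : ℕ} (E : Fin n → Fin n → Prop) (S : Finset (Fin n)) (j : Fin n) :
    Finset (Fin n) :=
  insert j S \ oplus E S j

/-- A family of strongly connected subsets is nested if any two members are nested or
disjoint, and any tuple of pairwise disjoint members are exactly the strongly connected
components of their union. -/
def Nested {n : ℕ} (E : Fin n → Fin n → Prop) (𝒮 : Finset (Finset (Fin n))) : Prop :=
  (∀ I ∈ 𝒮, StronglyConnected E I) ∧
  (∀ I ∈ 𝒮, ∀ J ∈ 𝒮, I ⊆ J ∨ J ⊆ I ∨ Disjoint I J) ∧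
  (∀ 𝒯 ⊆ 𝒮, (∀ I ∈ 𝒯, ∀ J ∈ 𝒯, I ≠ J → Disjoint I J) →
    ∀ I ∈ 𝒯, ∀ x ∈ I, scc E (𝒯.sup id) x = I)

/-- The support of a collection: the union of its members. -/
def nsupport {n : ℕ} (𝒮 : Finset (Finset (Fin n))) : Finset (Fin n) := 𝒮.sup id

/-- A nested collection is maximal (for its support) if the only nested collection with the
same support containing it is itself. -/
def MaximalNested {n : ℕ} (E : Fin n → Fin n → Prop) (𝒮 : Finset (Finset (Fin n))) : Prop :=
  Nested E 𝒮 ∧ ∀ 𝒮' : Finset (Finset (Fin n)),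
    Nested E 𝒮' → nsupport 𝒮' = nsupport 𝒮 → 𝒮 ⊆ 𝒮' → 𝒮' = 𝒮

lemma reachIn_mono {n : ℕ} {E : Fin n → Fin n → Prop} {U V : Finset (Fin n)} (h : U ⊆ V)
    {a b : Fin n} (hr : ReachIn E U a b) : ReachIn E V a b :=
  Relation.ReflTransGen.mono (p := fun x y => E x y ∧ x ∈ V ∧ y ∈ V)
    (fun _ _ hxy => ⟨hxy.1, h hxy.2.1, h hxy.2.2⟩) _ _ hr

lemma mem_scc {n : ℕ} {E : Fin n → Fin n → Prop} {U : Finset (Fin n)} {x y : Fin n} :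
    y ∈ scc E U x ↔ y ∈ U ∧ ReachIn E U x y ∧ ReachIn E U y x := by
  classical
  simp [scc]

lemma self_mem_scc {n : ℕ} {E : Fin n → Fin n → Prop} {U : Finset (Fin n)} {x : Fin n}
    (hx : x ∈ U) : x ∈ scc E U x := mem_scc.2 ⟨hx, .refl, .refl⟩

lemma scc_subset {n : ℕ} {E : Fin n → Fin n → Prop} {U : Finset (Fin n)} {x : Fin n} :
    scc E U x ⊆ U := fun _ hy => (mem_scc.1 hy).1

lemma reachIn_scc {n : ℕ} {E : Fin n → Fin n → Prop} {U : Finset (Fin n)} {x a : Fin n}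
    (hxa : ReachIn E U x a) :
    ∀ {b : Fin n}, ReachIn E U a b → ReachIn E U b x → ReachIn E (scc E U x) a b := by
  intro b hab
  induction hab with
  | refl => exact fun _ => .refl
  | @tail c d h₁ h₂ ih =>
    intro hdx
    have hcx : ReachIn E U c x := Relation.ReflTransGen.head h₂ hdx
    have hxc : ReachIn E U x c := hxa.trans h₁
    exact (ih hcx).tail ⟨h₂.1, mem_scc.2 ⟨h₂.2.1, hxc, hcx⟩,
      mem_scc.2 ⟨h₂.2.2, hxc.tail h₂, hdx⟩⟩

lemma scc_sc {n : ℕ} {E : Fin n → Fin n → Prop} {U : Finset (Fin n)} {x : Fin n}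
    (hx : x ∈ U) : StronglyConnected E (scc E U x) := by
  refine ⟨⟨x, self_mem_scc hx⟩, ?_⟩
  intro a ha b hb
  rw [mem_scc] at ha hb
  exact reachIn_scc ha.2.1 (ha.2.2.trans hb.2.1) hb.2.2


/-- Activation: if `𝒮` is a maximal nested collection with support `S` and `s ∉ S`, then
`μ_s(𝒮) = 𝒮 ∪ {S ⊕ s}` is a maximal nested collection with support `S ∪ {s}`. -/
theorem stmt1 (n : ℕ) (E : Fin n → Fin n → Prop) (hE : ∀ i, ¬ E i i)
    (𝒮 : Finset (Finset (Fin n))) (h𝒮 : MaximalNested E 𝒮)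
    (s : Fin n) (hs : s ∉ nsupport 𝒮) :
    MaximalNested E (insert (oplus E (nsupport 𝒮) s) 𝒮) ∧
      nsupport (insert (oplus E (nsupport 𝒮) s) 𝒮) = insert s (nsupport 𝒮) := by
  classical
  set S := nsupport 𝒮 with hSdef
  set V : Finset (Fin n) := insert s S with hVdef
  set K : Finset (Fin n) := oplus E S s with hKset
  have hKdef : K = scc E V s := rfl
  have hKV : K ⊆ V := scc_subset
  have hsV : s ∈ V := Finset.mem_insert_self _ _
  have hsK : s ∈ K := self_mem_scc hsV
  have hIS : ∀ I ∈ 𝒮, I ⊆ S := fun I hI => Finset.le_sup (f := id) hI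
  have hsI : ∀ I ∈ 𝒮, s ∉ I := fun I hI h => hs (hIS I hI h)
  have hSV : S ⊆ V := Finset.subset_insert _ _
  have hKsc : StronglyConnected E K := scc_sc hsV
  -- support claim
  have hsupp' : nsupport (insert K 𝒮) = V := by
    apply Finset.Subset.antisymm
    · intro y hy
      obtain ⟨A, hA, hyA⟩ := Finset.mem_sup.1 hy
      rcases Finset.mem_insert.1 hA with rfl | hA
      · exact hKV hyA
      · exact hSV (hIS A hA hyA)
    · intro y hy
      rcases Finset.mem_insert.1 hy with rfl | hy
      · exact Finset.mem_sup.2 ⟨K, Finset.mem_insert_self K 𝒮, hsK⟩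
      · obtain ⟨A, hA, hyA⟩ := Finset.mem_sup.1 hy
        exact Finset.mem_sup.2 ⟨A, Finset.mem_insert_of_mem hA, hyA⟩
  have absorb : ∀ J : Finset (Fin n), J ⊆ V → StronglyConnected E J → s ∈ J → J ⊆ K := by
    intro J hJV hJsc hsJ y hy
    rw [hKdef]
    exact mem_scc.2 ⟨hJV hy, reachIn_mono hJV (hJsc.2 s hsJ y hy),
      reachIn_mono hJV (hJsc.2 y hy s hsJ)⟩
  have hpair : ∀ I ∈ 𝒮, ¬ Disjoint I K → I ⊆ K := by
    intro I hI hnd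
    obtain ⟨v, hvI, hvK⟩ := Finset.not_disjoint_iff.1 hnd
    have hIsc := h𝒮.1.1 I hI
    have hIV : I ⊆ V := (hIS I hI).trans hSV
    intro w hw
    have hwv : ReachIn E V w v := reachIn_mono hIV (hIsc.2 w hw v hvI)
    have hvw : ReachIn E V v w := reachIn_mono hIV (hIsc.2 v hvI w hw)
    rw [hKdef, mem_scc] at hvK
    rw [hKdef]
    exact mem_scc.2 ⟨hIV hw, hvK.2.1.trans hvw, hwv.trans hvK.2.2⟩
  -- Nested
  have hnest : Nested E (insert K 𝒮) := by
    refine ⟨?_, ?_, ?_⟩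
    · intro I hI
      rcases Finset.mem_insert.1 hI with rfl | hI
      · exact hKsc
      · exact h𝒮.1.1 I hI
    · intro I hI J hJ
      rcases Finset.mem_insert.1 hI with rfl | hI <;> rcases Finset.mem_insert.1 hJ with rfl | hJ
      · exact Or.inl Finset.Subset.rfl
      · by_cases hd : Disjoint J K
        · exact Or.inr (Or.inr hd.symm)
        · exact Or.inr (Or.inl (hpair J hJ hd))
      · by_cases hd : Disjoint I K
        · exact Or.inr (Or.inr hd)
        · exact Or.inl (hpair I hI hd)
      · exact h𝒮.1.2.1 I hI J hJ
    · intro 𝒯 h𝒯 hdisj I hI x hx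
      by_cases hK𝒯 : K ∈ 𝒯
      case neg =>
        have h𝒯S : 𝒯 ⊆ 𝒮 := by
          intro J hJ
          rcases Finset.mem_insert.1 (h𝒯 hJ) with rfl | h
          · exact absurd hJ hK𝒯
          · exact h
        exact h𝒮.1.2.2 𝒯 h𝒯S hdisj I hI x hx
      case pos =>
        have hUV : 𝒯.sup id ⊆ V := by
          intro y hy
          obtain ⟨A, hA, hyA⟩ := Finset.mem_sup.1 hy
          rcases Finset.mem_insert.1 (h𝒯 hA) with rfl | h
          · exact hKV hyA
          · exact hSV (hIS A h hyA)
        have hKU : K ⊆ 𝒯.sup id := Finset.le_sup (f := id) hK𝒯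
        by_cases hIK : I = K
        · subst hIK
          apply Finset.Subset.antisymm
          · intro y hy
            rw [mem_scc] at hy
            have hxK := hx
            rw [hKdef, mem_scc] at hxK
            rw [hKdef]
            exact mem_scc.2 ⟨hUV hy.1, hxK.2.1.trans (reachIn_mono hUV hy.2.1),
              (reachIn_mono hUV hy.2.2).trans hxK.2.2⟩
          · intro y hy
            exact mem_scc.2 ⟨hKU hy, reachIn_mono hKU (hKsc.2 x hx y hy),
              reachIn_mono hKU (hKsc.2 y hy x hx)⟩
        · have hI𝒮 : I ∈ 𝒮 := by
            rcases Finset.mem_insert.1 (h𝒯 hI) with rfl | h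
            · exact absurd rfl hIK
            · exact h
          have hI𝒯₀ : I ∈ 𝒯.erase K := Finset.mem_erase.2 ⟨hIK, hI⟩
          have h𝒯₀𝒮 : 𝒯.erase K ⊆ 𝒮 := by
            intro J hJ
            rcases Finset.mem_insert.1 (h𝒯 (Finset.mem_of_mem_erase hJ)) with rfl | h
            · exact absurd rfl (Finset.mem_erase.1 hJ).1
            · exact h
          have hU₀U : (𝒯.erase K).sup id ⊆ 𝒯.sup id :=
            Finset.sup_mono (Finset.erase_subset _ _)
          have hUsplit : ∀ y ∈ 𝒯.sup id, y ∉ K → y ∈ (𝒯.erase K).sup id := by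
            intro y hyU hyK
            obtain ⟨J, hJ, hyJ⟩ := Finset.mem_sup.1 hyU
            have hJ' : J ∈ 𝒯.erase K := Finset.mem_erase.2 ⟨fun h => hyK (h ▸ hyJ), hJ⟩
            exact Finset.mem_sup.2 ⟨J, hJ', hyJ⟩
          have hbase : scc E ((𝒯.erase K).sup id) x = I := by
            apply h𝒮.1.2.2 (𝒯.erase K) h𝒯₀𝒮 ?_ I hI𝒯₀ x hx
            intro A hA B hB hAB
            exact hdisj A (Finset.mem_of_mem_erase hA) B (Finset.mem_of_mem_erase hB) hAB
          have hdisjIK : Disjoint I K := hdisj I hI K hK𝒯 hIK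
          have hxU : x ∈ 𝒯.sup id := Finset.le_sup (f := id) hI hx
          have hsccK : ∀ w ∈ scc E (𝒯.sup id) x, w ∉ K := by
            intro w hw hwK
            rw [mem_scc] at hw
            rw [hKdef, mem_scc] at hwK
            have hxK : x ∈ K := by
              rw [hKdef]
              exact mem_scc.2 ⟨hUV hxU, hwK.2.1.trans (reachIn_mono hUV hw.2.2),
                (reachIn_mono hUV hw.2.1).trans hwK.2.2⟩
            exact (Finset.disjoint_left.1 hdisjIK hx) hxK
          have hsccU₀ : scc E (𝒯.sup id) x ⊆ (𝒯.erase K).sup id :=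
            fun w hw => hUsplit w (scc_subset hw) (hsccK w hw)
          apply Finset.Subset.antisymm
          · intro y hy
            rw [mem_scc] at hy
            rw [← hbase, mem_scc]
            have h1 : ReachIn E (scc E (𝒯.sup id) x) x y := reachIn_scc .refl hy.2.1 hy.2.2
            have h2 : ReachIn E (scc E (𝒯.sup id) x) y x := reachIn_scc hy.2.1 hy.2.2 .refl
            exact ⟨hsccU₀ (mem_scc.2 hy), reachIn_mono hsccU₀ h1, reachIn_mono hsccU₀ h2⟩
          · rw [← hbase]
            intro y hy
            rw [mem_scc] at hy ⊢
            exact ⟨hU₀U hy.1, reachIn_mono hU₀U hy.2.1, reachIn_mono hU₀U hy.2.2⟩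
  refine ⟨⟨hnest, ?_⟩, hsupp'⟩
  intro 𝒮'' h'' hsupp hsub
  apply Finset.Subset.antisymm _ hsub
  intro J hJ
  have hmemV : ∀ I ∈ 𝒮'', I ⊆ V := by
    intro I hI
    have h1 : I ⊆ nsupport 𝒮'' := Finset.le_sup (f := id) hI
    rwa [hsupp, hsupp'] at h1
  have h𝒯sub : 𝒮''.filter (fun J => s ∉ J) ⊆ 𝒮'' := Finset.filter_subset _ _
  have h𝒯nested : Nested E (𝒮''.filter (fun J => s ∉ J)) :=
    ⟨fun I hI => h''.1 I (h𝒯sub hI),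
     fun I hI J hJ' => h''.2.1 I (h𝒯sub hI) J (h𝒯sub hJ'),
     fun 𝒯' h' hd => h''.2.2 𝒯' (h'.trans h𝒯sub) hd⟩
  have h𝒮𝒯 : 𝒮 ⊆ 𝒮''.filter (fun J => s ∉ J) := by
    intro I hI
    exact Finset.mem_filter.2 ⟨hsub (Finset.mem_insert_of_mem hI), hsI I hI⟩
  have h𝒯supp : nsupport (𝒮''.filter (fun J => s ∉ J)) = S := by
    apply Finset.Subset.antisymm
    · intro y hy
      obtain ⟨I, hI, hyI⟩ := Finset.mem_sup.1 hy
      obtain ⟨hI'', hsI'⟩ := Finset.mem_filter.1 hI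
      rcases Finset.mem_insert.1 (hmemV I hI'' hyI) with rfl | h
      · exact absurd hyI hsI'
      · exact h
    · intro y hy
      obtain ⟨I, hI, hyI⟩ := Finset.mem_sup.1 hy
      exact Finset.mem_sup.2 ⟨I, h𝒮𝒯 hI, hyI⟩
  have h𝒯eq : 𝒮''.filter (fun J => s ∉ J) = 𝒮 := h𝒮.2 _ h𝒯nested h𝒯supp h𝒮𝒯
  by_cases hsJ : s ∈ J
  case neg =>
    have hJ' : J ∈ 𝒮''.filter (fun J => s ∉ J) := Finset.mem_filter.2 ⟨hJ, hsJ⟩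
    rw [h𝒯eq] at hJ'
    exact Finset.mem_insert_of_mem hJ'
  case pos =>
    have hJsc := h''.1 J hJ
    have hJK : J ⊆ K := absorb J (hmemV J hJ) hJsc hsJ
    have hK'' : K ∈ 𝒮'' := hsub (Finset.mem_insert_self _ _)
    have hIKJ : ∀ I ∈ 𝒮, ∀ v ∈ I, v ∈ K → v ∉ J → I ⊆ K \ J := by
      intro I hI' v hvI hvK hvJ
      have hI'' : I ∈ 𝒮'' := hsub (Finset.mem_insert_of_mem hI')
      have hIK : I ⊆ K := by
        rcases h''.2.1 I hI'' K hK'' with h | h | h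
        · exact h
        · exact absurd (h hsK) (hsI I hI')
        · exact absurd hvK (Finset.disjoint_left.1 h hvI)
      have hIJ : Disjoint I J := by
        rcases h''.2.1 I hI'' J hJ with h | h | h
        · exact absurd (h hvI) hvJ
        · exact absurd (h hsJ) (hsI I hI')
        · exact h
      intro w hw
      exact Finset.mem_sdiff.2 ⟨hIK hw, Finset.disjoint_left.1 hIJ hw⟩
    have hmax : ∀ v ∈ K \ J, ∃ M, M ∈ 𝒮 ∧ v ∈ M ∧ ∀ I ∈ 𝒮, v ∈ I → I ⊆ M := by
      intro v hv
      obtain ⟨hvK, hvJ⟩ := Finset.mem_sdiff.1 hv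
      have hvS : v ∈ S := by
        rcases Finset.mem_insert.1 (hKV hvK) with rfl | h
        · exact absurd hsJ hvJ
        · exact h
      have hne : (𝒮.filter (fun I => v ∈ I)).Nonempty := by
        obtain ⟨I, hI', hvI⟩ := Finset.mem_sup.1 hvS
        exact ⟨I, Finset.mem_filter.2 ⟨hI', hvI⟩⟩
      obtain ⟨M, hM, hMmax'⟩ := Finset.exists_maximal hne
      have hMmax : ∀ I ∈ 𝒮.filter (fun I => v ∈ I), ¬ M < I :=
        fun I hI hlt => hlt.not_ge (hMmax' hI hlt.le)
      obtain ⟨hM𝒮, hvM⟩ := Finset.mem_filter.1 hM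
      refine ⟨M, hM𝒮, hvM, ?_⟩
      intro I hI' hvI
      rcases h𝒮.1.2.1 I hI' M hM𝒮 with h | h | h
      · exact h
      · by_cases hMI : I ⊆ M
        · exact hMI
        · have hlt : M < I := lt_of_le_not_ge (Finset.le_iff_subset.2 h)
            (fun h2 => hMI (Finset.le_iff_subset.1 h2))
          exact absurd hlt (hMmax I (Finset.mem_filter.2 ⟨hI', hvI⟩))
      · exact absurd hvM (Finset.disjoint_left.1 h hvI)
    choose! f hf𝒮 hfv hfmax using hmax
    have hfKJ : ∀ v ∈ K \ J, f v ⊆ K \ J := by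
      intro v hv
      exact hIKJ (f v) (hf𝒮 v hv) v (hfv v hv) (Finset.mem_sdiff.1 hv).1 (Finset.mem_sdiff.1 hv).2
    have hTsub : insert J ((K \ J).image f) ⊆ 𝒮'' := by
      intro A hA
      rcases Finset.mem_insert.1 hA with rfl | hA
      · exact hJ
      · obtain ⟨v, hv, rfl⟩ := Finset.mem_image.1 hA
        exact hsub (Finset.mem_insert_of_mem (hf𝒮 v hv))
    have hTdisj : ∀ A ∈ insert J ((K \ J).image f), ∀ B ∈ insert J ((K \ J).image f),
        A ≠ B → Disjoint A B := by
      have himg : ∀ C ∈ (K \ J).image f, Disjoint C J := by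
        intro C hC
        obtain ⟨v, hv, rfl⟩ := Finset.mem_image.1 hC
        exact Finset.disjoint_of_subset_left (hfKJ v hv) Finset.sdiff_disjoint
      intro A hA B hB hAB
      rcases Finset.mem_insert.1 hA with rfl | hA' <;> rcases Finset.mem_insert.1 hB with rfl | hB'
      · exact absurd rfl hAB
      · exact (himg B hB').symm
      · exact himg A hA'
      · obtain ⟨v, hv, rfl⟩ := Finset.mem_image.1 hA'
        obtain ⟨w, hw, rfl⟩ := Finset.mem_image.1 hB'
        by_contra hnd
        obtain ⟨x, hxA, hxB⟩ := Finset.not_disjoint_iff.1 hnd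
        rcases h𝒮.1.2.1 (f v) (hf𝒮 v hv) (f w) (hf𝒮 w hw) with h | h | h
        · exact hAB (Finset.Subset.antisymm h
            (hfmax v hv (f w) (hf𝒮 w hw) (h (hfv v hv))))
        · exact hAB (Finset.Subset.antisymm
            (hfmax w hw (f v) (hf𝒮 v hv) (h (hfv w hw))) h)
        · exact absurd hxB (Finset.disjoint_left.1 h hxA)
    have hTsup : (insert J ((K \ J).image f)).sup id = K := by
      apply Finset.Subset.antisymm
      · intro y hy
        obtain ⟨A, hA, hyA⟩ := Finset.mem_sup.1 hy
        rcases Finset.mem_insert.1 hA with rfl | hA'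
        · exact hJK hyA
        · obtain ⟨v, hv, rfl⟩ := Finset.mem_image.1 hA'
          exact (Finset.mem_sdiff.1 ((hfKJ v hv) hyA)).1
      · intro y hy
        by_cases hyJ : y ∈ J
        · exact Finset.mem_sup.2 ⟨J, Finset.mem_insert_self _ _, hyJ⟩
        · have hyKJ : y ∈ K \ J := Finset.mem_sdiff.2 ⟨hy, hyJ⟩
          exact Finset.mem_sup.2 ⟨f y, Finset.mem_insert_of_mem (Finset.mem_image_of_mem f hyKJ),
            hfv y hyKJ⟩
    have hKJ' : scc E K s = J := by
      have h3 := h''.2.2 _ hTsub hTdisj J (Finset.mem_insert_self _ _) s hsJ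
      rwa [hTsup] at h3
    have hKK : scc E K s = K := by
      apply Finset.Subset.antisymm scc_subset
      intro y hy
      exact mem_scc.2 ⟨hy, hKsc.2 s hsK y hy, hKsc.2 y hy s hsK⟩
    have hJKeq : J = K := by rw [← hKJ', hKK]
    rw [hJKeq]
    exact Finset.mem_insert_self _ _
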